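/- Let s, w be complex numbers with Re(s) > 1 and Re(w) > 1/2. Then Σ_{l ≥ 1, l odd} l^{−2w} · Σ_{n ≥ 1, gcd(n, 2l) = 1} n^{−s} = ζ(s)·ζ(2w)·P(s, w), where P(s, w) = (1 − 2^{−s})(1 − 2^{−2w})·Π_{p odd prime} (1 − p^{−s−2w}). Equivalently, Σ_{m odd, m a perfect square} L(s, χ^{(4m)}) m^{−w} = ζ(s)·ζ(2w)·P(s, w), since for odd l the character χ^{(4l²)} is the principal character modulo 4l² and L(s, χ^{(4l²)}) = Σ_{gcd(n, 2l) = 1} n^{−s} = ζ(s)·Π_{p | 2l} (1 − p^{−s}). -/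

import Mathlib

open Complex

/-- The factor `P(s, w) = (1 − 2^{−s})(1 − 2^{−2w})·∏_{p odd prime} (1 − p^{−s−2w})`. -/
noncomputable def Pfactor (s w : ℂ) : ℂ :=
  (1 - (2 : ℂ) ^ (-s)) * (1 - (2 : ℂ) ^ (-(2 * w))) *
    ∏' p : {p : ℕ // p.Prime ∧ Odd p}, (1 - ((p : ℕ) : ℂ) ^ (-s - 2 * w))

open ArithmeticFunction
open scoped LSeries.notation

set_option maxHeartbeats 1000000

lemma sum_div_moebius (n : ℕ) :
    (∑ d ∈ n.divisors, ((moebius d : ℤ) : ℂ)) = if n = 1 then 1 else 0 := by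
  have h : ((moebius : ArithmeticFunction ℤ) : ArithmeticFunction ℂ) * zeta = 1 :=
    coe_moebius_mul_coe_zeta
  have h2 := coe_mul_zeta_apply (R := ℂ)
    (f := ((moebius : ArithmeticFunction ℤ) : ArithmeticFunction ℂ)) (x := n)
  rw [h] at h2
  simp only [intCoe_apply] at h2
  rw [← h2]
  simp [one_apply]

lemma natCast_mul_cpow (a b : ℕ) (r : ℂ) :
    ((a * b : ℕ) : ℂ) ^ r = (a : ℂ) ^ r * (b : ℂ) ^ r := by
  have := mul_cpow_ofReal_nonneg (a := (a : ℝ)) (b := (b : ℝ))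
    (Nat.cast_nonneg a) (Nat.cast_nonneg b) r
  push_cast at this ⊢
  exact this

lemma summable_norm_nat_cpow {c : ℂ} (hc : 1 < c.re) :
    Summable (fun n : ℕ => ‖(n : ℂ) ^ (-c)‖) := by
  have hc0 : -c ≠ 0 := by
    intro h; rw [neg_eq_zero] at h; rw [h] at hc; simp at hc; linarith
  refine Summable.of_nonneg_of_le (fun n => norm_nonneg _) (fun n => ?_)
    (Real.summable_one_div_nat_rpow.mpr hc)
  rcases Nat.eq_zero_or_pos n with rfl | hn
  · simp [Complex.zero_cpow hc0]
    positivity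
  · rw [Complex.norm_natCast_cpow_of_pos hn, neg_re,
      Real.rpow_neg (Nat.cast_nonneg n), one_div]

lemma summable_ite_cpow {c : ℂ} (hc : 1 < c.re) (P : ℕ → Prop) [DecidablePred P] :
    Summable (fun n : ℕ => if P n then (n : ℂ) ^ (-c) else 0) := by
  refine Summable.of_norm (Summable.of_nonneg_of_le (fun n => norm_nonneg _)
    (fun n => ?_) (summable_norm_nat_cpow hc))
  split <;> simp

lemma zeta_tsum {s : ℂ} (hs : 1 < s.re) :
    riemannZeta s = ∑' n : ℕ, (n : ℂ) ^ (-s) := by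
  rw [zeta_eq_tsum_one_div_nat_cpow hs]
  exact tsum_congr fun n => by rw [cpow_neg, one_div]

lemma tsum_dvd_cpow {s : ℂ} (hs : 1 < s.re) {d : ℕ} (hd : 0 < d) :
    (∑' n : ℕ, if d ∣ n then (n : ℂ) ^ (-s) else 0) = (d : ℂ) ^ (-s) * riemannZeta s := by
  have hinj : Function.Injective (fun k : ℕ => d * k) := fun a b h => by
    exact Nat.eq_of_mul_eq_mul_left hd h
  have hsupp : Function.support (fun n : ℕ => if d ∣ n then (n : ℂ) ^ (-s) else 0)
      ⊆ Set.range (fun k : ℕ => d * k) := by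
    intro n hn
    simp only [Function.mem_support, ne_eq, ite_eq_right_iff, not_forall] at hn
    obtain ⟨⟨k, rfl⟩, -⟩ := hn
    exact ⟨k, rfl⟩
  rw [← Function.Injective.tsum_eq hinj hsupp]
  have : ∀ k : ℕ, (if d ∣ d * k then ((d * k : ℕ) : ℂ) ^ (-s) else 0)
      = (d : ℂ) ^ (-s) * (k : ℂ) ^ (-s) := fun k => by
    rw [if_pos ⟨k, rfl⟩, natCast_mul_cpow]
  simp only [this]
  rw [tsum_mul_left, ← zeta_tsum hs]

lemma inner_sum_eval {s : ℂ} (hs : 1 < s.re) {N : ℕ} (hN : 0 < N) :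
    (∑' n : ℕ, if Nat.Coprime n N then (n : ℂ) ^ (-s) else 0) =
      (∑ d ∈ N.divisors, ((moebius d : ℤ) : ℂ) * (d : ℂ) ^ (-s)) * riemannZeta s := by
  have hs0 : -s ≠ 0 := by
    intro h; rw [neg_eq_zero] at h; rw [h] at hs; simp at hs; linarith
  have hpt : ∀ n : ℕ, (if Nat.Coprime n N then (n : ℂ) ^ (-s) else 0) =
      ∑ d ∈ N.divisors, ((moebius d : ℤ) : ℂ) * (if d ∣ n then (n : ℂ) ^ (-s) else 0) := by
    intro n
    rcases Nat.eq_zero_or_pos n with rfl | hn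
    · simp [Complex.zero_cpow hs0]
    · have hfil : N.divisors.filter (· ∣ n) = (Nat.gcd n N).divisors := by
        ext d
        simp only [Finset.mem_filter, Nat.mem_divisors, Nat.dvd_gcd_iff]
        constructor
        · rintro ⟨⟨h1, -⟩, h2⟩
          exact ⟨⟨h2, h1⟩, Nat.gcd_ne_zero_right hN.ne'⟩
        · rintro ⟨⟨h1, h2⟩, -⟩
          exact ⟨⟨h2, hN.ne'⟩, h1⟩
      have : ∀ d ∈ N.divisors, ((moebius d : ℤ) : ℂ) * (if d ∣ n then (n : ℂ) ^ (-s) else 0)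
          = if d ∣ n then ((moebius d : ℤ) : ℂ) * (n : ℂ) ^ (-s) else 0 := by
        intro d _; split <;> simp
      rw [Finset.sum_congr rfl this, ← Finset.sum_filter, hfil, ← Finset.sum_mul,
        sum_div_moebius]
      by_cases h : n.gcd N = 1 <;> simp [Nat.Coprime, h]
  rw [tsum_congr hpt]
  rw [Summable.tsum_finsetSum (fun d _ => ((summable_ite_cpow hs (d ∣ ·)).mul_left _))]
  have key : ∀ d ∈ N.divisors,
      (∑' b : ℕ, ((moebius d : ℤ) : ℂ) * if d ∣ b then (b : ℂ) ^ (-s) else 0)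
        = ((moebius d : ℤ) : ℂ) * (d : ℂ) ^ (-s) * riemannZeta s := by
    intro d hd
    rw [tsum_mul_left, tsum_dvd_cpow hs (Nat.pos_of_mem_divisors hd), mul_assoc]
  rw [Finset.sum_congr rfl key, ← Finset.sum_mul]

noncomputable def FmuPow (s : ℂ) : ArithmeticFunction ℂ :=
  ⟨fun d => ((moebius d : ℤ) : ℂ) * (d : ℂ) ^ (-s), by simp⟩

lemma FmuPow_apply (s : ℂ) (d : ℕ) :
    FmuPow s d = ((moebius d : ℤ) : ℂ) * (d : ℂ) ^ (-s) := rfl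

lemma isMultiplicative_FmuPow (s : ℂ) : (FmuPow s).IsMultiplicative := by
  constructor
  · simp [FmuPow_apply]
  · intro m n hmn
    simp only [FmuPow_apply, isMultiplicative_moebius.map_mul_of_coprime hmn,
      natCast_mul_cpow]
    push_cast
    ring

lemma divisor_sum_two_mul {s : ℂ} {l : ℕ} (hl : Odd l) :
    (∑ d ∈ (2 * l).divisors, ((moebius d : ℤ) : ℂ) * (d : ℂ) ^ (-s)) =
      (1 - (2 : ℂ) ^ (-s)) *
        ∑ d ∈ l.divisors, ((moebius d : ℤ) : ℂ) * (d : ℂ) ^ (-s) := by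
  have hmult : ((FmuPow s) * (zeta : ArithmeticFunction ℕ)).IsMultiplicative :=
    (isMultiplicative_FmuPow s).mul isMultiplicative_zeta.natCast
  have happ : ∀ m : ℕ, ((FmuPow s) * (zeta : ArithmeticFunction ℕ)) m
      = ∑ d ∈ m.divisors, ((moebius d : ℤ) : ℂ) * (d : ℂ) ^ (-s) := by
    intro m
    rw [coe_mul_zeta_apply]
    rfl
  have hcop : Nat.Coprime 2 l := hl.coprime_two_left
  have h2 : ((FmuPow s) * (zeta : ArithmeticFunction ℕ)) 2 = 1 - (2 : ℂ) ^ (-s) := by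
    rw [happ, Nat.Prime.divisors Nat.prime_two]
    rw [show ({1, 2} : Finset ℕ) = insert 1 {2} from rfl, Finset.sum_insert (by decide),
      Finset.sum_singleton]
    simp [moebius_apply_prime Nat.prime_two]
    ring
  rw [← happ, ← happ, hmult.map_mul_of_coprime hcop, h2]

lemma norm_moebius_le_one (n : ℕ) : ‖((moebius n : ℤ) : ℂ)‖ ≤ 1 := by
  have h : |moebius n| ≤ 1 := abs_moebius_le_one
  have h2 : ((moebius n : ℤ) : ℂ) = (((moebius n : ℤ) : ℝ) : ℂ) := by push_cast; rfl
  rw [h2, Complex.norm_real, Real.norm_eq_abs, ← Int.cast_abs]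
  exact_mod_cast h

noncomputable def uFun (s w : ℂ) : ℕ → ℂ :=
  fun d => if Odd d then ((moebius d : ℤ) : ℂ) * (d : ℂ) ^ (-s - 2 * w) else 0

noncomputable def vFun (w : ℂ) : ℕ → ℂ :=
  fun k => if Odd k then (k : ℂ) ^ (-(2 * w)) else 0

lemma summable_norm_uFun {s w : ℂ} (hs : 1 < s.re) (hw2 : 0 < (2 * w).re) :
    Summable (fun n : ℕ => ‖uFun s w n‖) := by
  have hc : 1 < (s + 2 * w).re := by
    rw [Complex.add_re]; linarith
  refine Summable.of_nonneg_of_le (fun n => norm_nonneg _) (fun n => ?_)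
    (summable_norm_nat_cpow hc)
  rw [uFun]
  have hT : -s - 2 * w = -(s + 2 * w) := by ring
  split
  · rw [hT, norm_mul]
    calc ‖((moebius n : ℤ) : ℂ)‖ * ‖(n : ℂ) ^ (-(s + 2 * w))‖
        ≤ 1 * ‖(n : ℂ) ^ (-(s + 2 * w))‖ := by
          exact mul_le_mul_of_nonneg_right (norm_moebius_le_one n) (norm_nonneg _)
      _ = ‖(n : ℂ) ^ (-(s + 2 * w))‖ := one_mul _
  · simp

lemma summable_norm_vFun {w : ℂ} (hw2 : 1 < (2 * w).re) :
    Summable (fun n : ℕ => ‖vFun w n‖) := by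
  refine Summable.of_nonneg_of_le (fun n => norm_nonneg _) (fun n => ?_)
    (summable_norm_nat_cpow hw2)
  rw [vFun]
  split <;> simp

lemma term_zero_exponent_eq (f : ℕ → ℂ) (hf0 : f 0 = 0) : LSeries.term f 0 = f := by
  funext n
  rcases Nat.eq_zero_or_pos n with rfl | hn
  · rw [LSeries.term_zero, hf0]
  · rw [LSeries.term_of_ne_zero hn.ne', cpow_zero, div_one]

lemma tsum_convolution {f g : ℕ → ℂ} (hf : Summable (fun n => ‖f n‖))
    (hg : Summable (fun n => ‖g n‖)) (hf0 : f 0 = 0) (hg0 : g 0 = 0) :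
    ∑' n : ℕ, (f ⍟ g) n = (∑' n : ℕ, f n) * (∑' n : ℕ, g n) := by
  have hfs : LSeriesSummable f 0 := by
    rw [LSeriesSummable, term_zero_exponent_eq f hf0]; exact hf.of_norm
  have hgs : LSeriesSummable g 0 := by
    rw [LSeriesSummable, term_zero_exponent_eq g hg0]; exact hg.of_norm
  have h := LSeries_convolution' hfs hgs
  rw [LSeries, LSeries, LSeries, term_zero_exponent_eq f hf0, term_zero_exponent_eq g hg0,
    term_zero_exponent_eq _ (LSeries.convolution_map_zero f g)] at h
  exact h

lemma tsum_vFun {w : ℂ} (hw2 : 1 < (2 * w).re) :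
    ∑' k : ℕ, vFun w k = riemannZeta (2 * w) * (1 - (2 : ℂ) ^ (-(2 * w))) := by
  have hv : Summable (vFun w) := (summable_norm_vFun hw2).of_norm
  have he : Summable (fun n : ℕ => if Even n then (n : ℂ) ^ (-(2 * w)) else 0) :=
    summable_ite_cpow hw2 Even
  have hsplit : ∀ n : ℕ, vFun w n + (if Even n then (n : ℂ) ^ (-(2 * w)) else 0)
      = (n : ℂ) ^ (-(2 * w)) := by
    intro n
    rcases Nat.even_or_odd n with h | h
    · rw [vFun, if_neg (Nat.not_odd_iff_even.mpr h), if_pos h, zero_add]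
    · rw [vFun, if_pos h, if_neg (Nat.not_even_iff_odd.mpr h), add_zero]
  have heven : (∑' n : ℕ, if Even n then (n : ℂ) ^ (-(2 * w)) else 0)
      = (2 : ℂ) ^ (-(2 * w)) * riemannZeta (2 * w) := by
    have h1 : ∀ n : ℕ, (if Even n then (n : ℂ) ^ (-(2 * w)) else 0)
        = (if 2 ∣ n then (n : ℂ) ^ (-(2 * w)) else 0) := by
      intro n; simp [even_iff_two_dvd]
    rw [tsum_congr h1, tsum_dvd_cpow hw2 (by norm_num : (0:ℕ) < 2)]
    norm_num
  have h1 : (∑' k : ℕ, vFun w k) + (2 : ℂ) ^ (-(2 * w)) * riemannZeta (2 * w)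
      = riemannZeta (2 * w) := by
    rw [← heven, ← Summable.tsum_add hv he, tsum_congr hsplit, ← zeta_tsum hw2]
  linear_combination h1

lemma conv_eq (s w : ℂ) (l : ℕ) :
    (uFun s w ⍟ vFun w) l =
      if Odd l then
        (l : ℂ) ^ (-(2 * w)) * ∑ d ∈ l.divisors, ((moebius d : ℤ) : ℂ) * (d : ℂ) ^ (-s)
      else 0 := by
  rw [LSeries.convolution_def]
  by_cases hl : Odd l
  · rw [if_pos hl]
    have hl0 : l ≠ 0 := by
      rintro rfl; exact (Nat.not_odd_iff_even.mpr (Even.zero)) hl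
    rw [Finset.mul_sum]
    rw [show (∑ d ∈ l.divisors, (l : ℂ) ^ (-(2 * w)) * (((moebius d : ℤ) : ℂ) * (d : ℂ) ^ (-s)))
        = ∑ p ∈ l.divisorsAntidiagonal,
            (l : ℂ) ^ (-(2 * w)) * (((moebius p.1 : ℤ) : ℂ) * (p.1 : ℂ) ^ (-s)) from
      (Nat.sum_divisorsAntidiagonal
        (fun d e => (l : ℂ) ^ (-(2 * w)) * (((moebius d : ℤ) : ℂ) * (d : ℂ) ^ (-s)))).symm]
    refine Finset.sum_congr rfl fun p hp => ?_
    obtain ⟨hmul, -⟩ := Nat.mem_divisorsAntidiagonal.mp hp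
    have hodd : Odd p.1 ∧ Odd p.2 := by
      rw [← Nat.odd_mul, hmul]; exact hl
    have hp1 : (p.1 : ℂ) ≠ 0 :=
      Nat.cast_ne_zero.mpr fun h => hl0 (by rw [← hmul, h, zero_mul])
    rw [uFun, vFun, if_pos hodd.1, if_pos hodd.2]
    have hsplit : (p.1 : ℂ) ^ (-s - 2 * w) = (p.1 : ℂ) ^ (-s) * (p.1 : ℂ) ^ (-(2 * w)) := by
      rw [show -s - 2 * w = -s + -(2 * w) from sub_eq_add_neg _ _, cpow_add _ _ hp1]
    rw [hsplit]
    have hlsplit : (l : ℂ) ^ (-(2 * w)) = (p.1 : ℂ) ^ (-(2 * w)) * (p.2 : ℂ) ^ (-(2 * w)) := by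
      rw [← natCast_mul_cpow, hmul]
    rw [hlsplit]
    ring
  · rw [if_neg hl]
    refine Finset.sum_eq_zero fun p hp => ?_
    obtain ⟨hmul, -⟩ := Nat.mem_divisorsAntidiagonal.mp hp
    rcases Nat.even_or_odd p.1 with h1 | h1
    · rw [uFun, if_neg (Nat.not_odd_iff_even.mpr h1), zero_mul]
    · rcases Nat.even_or_odd p.2 with h2 | h2
      · rw [vFun, if_neg (Nat.not_odd_iff_even.mpr h2), mul_zero]
      · exact absurd (hmul ▸ h1.mul h2) hl

lemma tsum_uFun {s w : ℂ} (hs : 1 < s.re) (hw2 : 1 < (2 * w).re) :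
    ∑' n : ℕ, uFun s w n =
      ∏' p : {p : ℕ // p.Prime ∧ Odd p}, (1 - ((p : ℕ) : ℂ) ^ (-s - 2 * w)) := by
  have hf1 : uFun s w 1 = 1 := by
    rw [uFun]
    simp [moebius_apply_one]
  have hf0 : uFun s w 0 = 0 := by
    rw [uFun]
    simp [Nat.odd_iff]
  have hmul : ∀ {m n : ℕ}, Nat.Coprime m n → uFun s w (m * n) = uFun s w m * uFun s w n := by
    intro m n hmn
    by_cases hm : Odd m
    · by_cases hn : Odd n
      · simp only [uFun]
        rw [if_pos (hm.mul hn), if_pos hm, if_pos hn,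
          isMultiplicative_moebius.map_mul_of_coprime hmn, natCast_mul_cpow]
        push_cast
        ring
      · simp only [uFun]
        rw [if_neg (fun h => hn (Nat.odd_mul.mp h).2), if_neg hn, mul_zero]
    · simp only [uFun]
      rw [if_neg (fun h => hm (Nat.odd_mul.mp h).1), if_neg hm, zero_mul]
  have hsum := summable_norm_uFun hs (by linarith : 0 < (2 * w).re)
  have hEuler := EulerProduct.eulerProduct_tprod hf1 hmul hsum hf0
  rw [← hEuler]
  -- factor at 2 is 1
  have h2 : ∀ p : Nat.Primes, (p : ℕ) = 2 → (∑' e : ℕ, uFun s w ((p : ℕ) ^ e)) = 1 := by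
    intro p hp
    rw [hp]
    rw [tsum_eq_single 0 (fun e he => ?_)]
    · rw [pow_zero, hf1]
    · rw [uFun, if_neg]
      rw [Nat.not_odd_iff_even]
      exact (even_iff_two_dvd).mpr (dvd_pow_self 2 he)
  -- factor at odd primes
  have hodd : ∀ p : ℕ, p.Prime → Odd p →
      (∑' e : ℕ, uFun s w (p ^ e)) = 1 - (p : ℂ) ^ (-s - 2 * w) := by
    intro p hp hpodd
    rw [tsum_eq_sum (s := {0, 1}) (fun e he => ?_)]
    · rw [Finset.sum_pair (by norm_num : (0:ℕ) ≠ 1), pow_zero, pow_one, hf1, uFun,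
        if_pos hpodd, moebius_apply_prime hp]
      push_cast
      ring
    · simp only [Finset.mem_insert, Finset.mem_singleton, not_or] at he
      rw [uFun, if_pos (hpodd.pow), moebius_apply_prime_pow hp he.1, if_neg he.2]
      simp
  -- transfer the tprod
  set F : Nat.Primes → ℂ := fun p => ∑' e : ℕ, uFun s w ((p : ℕ) ^ e) with hF
  have hinj : Function.Injective
      (fun q : {p : ℕ // p.Prime ∧ Odd p} => (⟨q.1, q.2.1⟩ : Nat.Primes)) := by
    intro a b h
    rw [Subtype.ext_iff] at h ⊢
    exact h
  have hsupp : Function.mulSupport F ⊆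
      Set.range (fun q : {p : ℕ // p.Prime ∧ Odd p} => (⟨q.1, q.2.1⟩ : Nat.Primes)) := by
    intro p hp
    rcases p.2.eq_two_or_odd' with h | h
    · exact absurd (h2 p h) hp
    · exact ⟨⟨p.1, p.2, h⟩, rfl⟩
  rw [show tprod F = _ from (Function.Injective.tprod_eq hinj hsupp).symm]
  exact tprod_congr fun q => hodd q.1 q.2.1 q.2.2

theorem sum_square_part_eq_zeta_zeta_P (s w : ℂ) (hs : 1 < s.re) (hw : 1 / 2 < w.re) :
    (∑' l : ℕ, if Odd l then
        (l : ℂ) ^ (-(2 * w)) * ∑' n : ℕ, (if Nat.Coprime n (2 * l) then (n : ℂ) ^ (-s) else 0)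
      else 0) =
      riemannZeta s * riemannZeta (2 * w) * Pfactor s w := by
  have hw2 : 1 < (2 * w).re := by
    have h : (2 * w).re = 2 * w.re := by simp [Complex.mul_re]
    rw [h]; linarith
  have hu0 : uFun s w 0 = 0 := by simp [uFun, Nat.odd_iff]
  have hv0 : vFun w 0 = 0 := by simp [vFun, Nat.odd_iff]
  have hpt : ∀ l : ℕ, (if Odd l then
        (l : ℂ) ^ (-(2 * w)) * ∑' n : ℕ, (if Nat.Coprime n (2 * l) then (n : ℂ) ^ (-s) else 0)
      else 0) = (riemannZeta s * (1 - (2 : ℂ) ^ (-s))) * (uFun s w ⍟ vFun w) l := by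
    intro l
    by_cases hl : Odd l
    · rw [if_pos hl, inner_sum_eval hs (Nat.mul_pos two_pos hl.pos),
        divisor_sum_two_mul hl, conv_eq, if_pos hl]
      ring
    · rw [if_neg hl, conv_eq, if_neg hl, mul_zero]
  rw [tsum_congr hpt, tsum_mul_left,
    tsum_convolution (summable_norm_uFun hs (by linarith)) (summable_norm_vFun hw2) hu0 hv0,
    tsum_uFun hs hw2, tsum_vFun hw2]
  unfold Pfactor
  ring
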